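/- Let K ≥ 1, and let H₁, …, H_K > 0 and A₁, …, A_K ≥ 1 be real numbers. For p ∈ ℝ₊^K define θ_k(p) = Σ_{i=k}^K p_i for 1 ≤ k ≤ K and θ_{K+1}(p) = 0, and define P_min = Σ_{k=1}^K (A_k − 1)/H_k · ∏_{j=1}^{k−1} A_j. Then: (a) every p ∈ ℝ₊^K satisfying θ_k(p) ≥ A_k·θ_{k+1}(p) + (A_k − 1)/H_k for all k ∈ {1, …, K} satisfies θ₁(p) ≥ P_min; and (b) for any P_max ≥ 0, the feasible set {p ∈ ℝ₊^K : θ₁(p) ≤ P_max and θ_k(p) ≥ A_k·θ_{k+1}(p) + (A_k − 1)/H_k for all k} is nonempty if and only if P_max ≥ P_min. -/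
import Mathlib

open Finset

private noncomputable def Tpot (K : ℕ) (H A : ℕ → ℝ) (k : ℕ) : ℝ :=
  ∑ i ∈ Finset.Icc k K, (A i - 1) / H i * ∏ j ∈ Finset.Icc k (i-1), A j

private lemma Icc_insert {k K : ℕ} (h : k ≤ K) :
    Finset.Icc k K = insert k (Finset.Icc (k+1) K) := by
  rw [Finset.Icc_add_one_left_eq_Ioc, Finset.Ioc_insert_left h]

private lemma Trec (K : ℕ) (H A : ℕ → ℝ) (k : ℕ) (hk : 1 ≤ k) (hkK : k ≤ K) :
    Tpot K H A k = (A k - 1) / H k + A k * Tpot K H A (k+1) := by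
  unfold Tpot
  rw [Icc_insert hkK, Finset.sum_insert (by simp)]
  congr 1
  · rw [Finset.Icc_eq_empty (by omega), Finset.prod_empty, mul_one]
  · rw [Finset.mul_sum]
    apply Finset.sum_congr rfl
    intro i hi
    simp only [Finset.mem_Icc] at hi
    rw [Icc_insert (by omega : k ≤ i - 1), Finset.prod_insert (by simp)]
    ring

private lemma Tnonneg (K : ℕ) (H A : ℕ → ℝ)
    (hH : ∀ k ∈ Finset.Icc 1 K, 0 < H k)
    (hA : ∀ k ∈ Finset.Icc 1 K, 1 ≤ A k) (k : ℕ) (hk : 1 ≤ k) :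
    0 ≤ Tpot K H A k := by
  apply Finset.sum_nonneg
  intro i hi
  simp only [Finset.mem_Icc] at hi
  apply mul_nonneg
  · apply div_nonneg
    · linarith [hA i (Finset.mem_Icc.mpr ⟨by omega, hi.2⟩)]
    · exact (hH i (Finset.mem_Icc.mpr ⟨by omega, hi.2⟩)).le
  · apply Finset.prod_nonneg
    intro j hj
    simp only [Finset.mem_Icc] at hj
    linarith [hA j (Finset.mem_Icc.mpr ⟨by omega, by omega⟩)]

private lemma Ttele (K : ℕ) (H A : ℕ → ℝ) :
    ∀ d, d ≤ K →
      ∑ i ∈ Finset.Icc (K+1-d) K, (Tpot K H A i - Tpot K H A (i+1))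
        = Tpot K H A (K+1-d) := by
  intro d
  induction d with
  | zero =>
    intro _
    simp [Tpot, Finset.Icc_eq_empty (by omega : ¬ K + 1 ≤ K)]
  | succ d ih =>
    intro hd
    have hk : K + 1 - (d+1) = K - d := by omega
    have hk1 : (K - d) + 1 = K + 1 - d := by omega
    rw [hk, Icc_insert (by omega : K - d ≤ K), Finset.sum_insert (by simp),
      hk1, ih (by omega)]
    ring

private lemma lower_bound (K : ℕ) (H A : ℕ → ℝ)
    (hA : ∀ k ∈ Finset.Icc 1 K, 1 ≤ A k) (p : ℕ → ℝ)
    (hcon : ∀ k ∈ Finset.Icc 1 K,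
      (∑ i ∈ Finset.Icc k K, p i) ≥
        A k * (∑ i ∈ Finset.Icc (k+1) K, p i) + (A k - 1) / H k) :
    ∀ d, d ≤ K → Tpot K H A (K+1-d) ≤ ∑ i ∈ Finset.Icc (K+1-d) K, p i := by
  intro d
  induction d with
  | zero =>
    intro _
    simp [Tpot, Finset.Icc_eq_empty (by omega : ¬ K + 1 ≤ K)]
  | succ d ih =>
    intro hd
    have hk : K + 1 - (d+1) = K - d := by omega
    have hk1 : (K - d) + 1 = K + 1 - d := by omega
    rw [hk]
    have hmem : K - d ∈ Finset.Icc 1 K := Finset.mem_Icc.mpr ⟨by omega, by omega⟩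
    have hA' := hA _ hmem
    have h1 := hcon _ hmem
    rw [hk1] at h1
    have h2 := ih (by omega)
    have h3 : A (K-d) * Tpot K H A (K+1-d) ≤
        A (K-d) * ∑ i ∈ Finset.Icc (K+1-d) K, p i :=
      mul_le_mul_of_nonneg_left h2 (by linarith)
    rw [Trec K H A (K-d) (by omega) (by omega), hk1]
    linarith

theorem feasibility_iff_Pmin (K : ℕ) (hK : 1 ≤ K) (H A : ℕ → ℝ)
    (hH : ∀ k ∈ Finset.Icc 1 K, 0 < H k)
    (hA : ∀ k ∈ Finset.Icc 1 K, 1 ≤ A k) (Pmax : ℝ) (hPmax : 0 ≤ Pmax) :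
    (∀ p : ℕ → ℝ, (∀ i ∈ Finset.Icc 1 K, 0 ≤ p i) →
        (∀ k ∈ Finset.Icc 1 K,
          (∑ i ∈ Finset.Icc k K, p i) ≥
            A k * (∑ i ∈ Finset.Icc (k+1) K, p i) + (A k - 1) / H k) →
        (∑ i ∈ Finset.Icc 1 K, p i) ≥
          ∑ k ∈ Finset.Icc 1 K, (A k - 1) / H k * ∏ j ∈ Finset.Icc 1 (k-1), A j) ∧
    ((∃ p : ℕ → ℝ, (∀ i ∈ Finset.Icc 1 K, 0 ≤ p i) ∧
        (∑ i ∈ Finset.Icc 1 K, p i) ≤ Pmax ∧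
        (∀ k ∈ Finset.Icc 1 K,
          (∑ i ∈ Finset.Icc k K, p i) ≥
            A k * (∑ i ∈ Finset.Icc (k+1) K, p i) + (A k - 1) / H k)) ↔
      Pmax ≥ ∑ k ∈ Finset.Icc 1 K, (A k - 1) / H k * ∏ j ∈ Finset.Icc 1 (k-1), A j) := by
  have hPmin : (∑ k ∈ Finset.Icc 1 K, (A k - 1) / H k * ∏ j ∈ Finset.Icc 1 (k-1), A j)
      = Tpot K H A 1 := rfl
  have hK1 : K + 1 - K = 1 := by omega
  have parta : ∀ p : ℕ → ℝ, (∀ i ∈ Finset.Icc 1 K, 0 ≤ p i) →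
      (∀ k ∈ Finset.Icc 1 K,
        (∑ i ∈ Finset.Icc k K, p i) ≥
          A k * (∑ i ∈ Finset.Icc (k+1) K, p i) + (A k - 1) / H k) →
      (∑ i ∈ Finset.Icc 1 K, p i) ≥
        ∑ k ∈ Finset.Icc 1 K, (A k - 1) / H k * ∏ j ∈ Finset.Icc 1 (k-1), A j := by
    intro p hp0 hcon
    rw [hPmin]
    have := lower_bound K H A hA p hcon K le_rfl
    rwa [hK1] at this
  refine ⟨parta, ?_, ?_⟩
  · rintro ⟨p, hp0, hple, hcon⟩
    exact le_trans (parta p hp0 hcon) hple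
  · intro hge
    rw [hPmin] at hge
    refine ⟨fun i => Tpot K H A i - Tpot K H A (i+1), ?_, ?_, ?_⟩
    · intro i hi
      show 0 ≤ Tpot K H A i - Tpot K H A (i+1)
      simp only [Finset.mem_Icc] at hi
      rw [Trec K H A i hi.1 hi.2]
      have h1 := Tnonneg K H A hH hA (i+1) (by omega)
      have h2 := hA i (Finset.mem_Icc.mpr hi)
      have h3 := (hH i (Finset.mem_Icc.mpr hi)).le
      have h4 : 0 ≤ (A i - 1) / H i := div_nonneg (by linarith) h3
      nlinarith
    · show ∑ i ∈ Finset.Icc 1 K, (Tpot K H A i - Tpot K H A (i+1)) ≤ Pmax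
      have := Ttele K H A K le_rfl
      rw [hK1] at this
      rw [this]
      exact hge
    · intro k hk
      show (∑ i ∈ Finset.Icc k K, (Tpot K H A i - Tpot K H A (i+1))) ≥
        A k * (∑ i ∈ Finset.Icc (k+1) K, (Tpot K H A i - Tpot K H A (i+1))) + (A k - 1) / H k
      simp only [Finset.mem_Icc] at hk
      have t1 := Ttele K H A (K+1-k) (by omega)
      rw [(by omega : K + 1 - (K+1-k) = k)] at t1
      have t2 := Ttele K H A (K-k) (by omega)
      rw [(by omega : K + 1 - (K-k) = k+1)] at t2
      rw [t1, t2, Trec K H A k hk.1 hk.2]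
      linarith
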